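/- There exists a universal constant C > 0 such that for every u : ℝ³ → ℂ^m in H¹(ℝ³,ℂ^m), writing n = |u|², N = ‖u‖₂², and T[u] = (1/2)∫ |∇u|² dx, the interaction energy D[n] = (1/16π)∬ n(x) n(y)/|x−y| dx dy is finite and satisfies D[n] ≤ (1/4) T[u] + C N³. In particular D[n] ≤ C' N^{3/2} T[u]^{1/2} for a universal constant C'. -/

import Mathlib

noncomputable section
open MeasureTheory Filter Real
open scoped Topology ENNReal

abbrev E3 : Type := EuclideanSpace ℝ (Fin 3)
abbrev Cd (m : ℕ) : Type := EuclideanSpace ℂ (Fin m)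

/-- Squared pointwise (Frobenius) norm of the gradient of `u`. -/
def gradSq {m : ℕ} (u : E3 → Cd m) (x : E3) : ℝ :=
  ∑ i : Fin 3, ‖fderiv ℝ u x (EuclideanSpace.single i (1 : ℝ))‖ ^ 2

/-- `u ∈ H¹(ℝ³, ℂ^m)`: differentiable with `u` and `∇u` square integrable. -/
def MemH1 {m : ℕ} (u : E3 → Cd m) : Prop :=
  Differentiable ℝ u ∧ Integrable (fun x => ‖u x‖ ^ 2) ∧ Integrable (gradSq u)

/-- The `H¹` norm, `‖u‖_{H¹}² = ‖u‖₂² + ‖∇u‖₂²`. -/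
def H1norm {m : ℕ} (u : E3 → Cd m) : ℝ :=
  Real.sqrt ((∫ x, ‖u x‖ ^ 2) + ∫ x, gradSq u x)

/-- Kinetic energy `T[u] = (1/2) ∫ |∇u|²`. -/
def Tkin {m : ℕ} (u : E3 → Cd m) : ℝ := (1 / 2) * ∫ x, gradSq u x

/-- `L[n] = (1/2) ∫ (−V(x)) n(x) dx`. -/
def Lpot (V : E3 → ℝ) (n : E3 → ℝ) : ℝ := (1 / 2) * ∫ x, (-(V x)) * n x

/-- Newtonian interaction energy `D[n] = (1/16π) ∬ n(x)n(y)/|x−y| dx dy`. -/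
def Dint (n : E3 → ℝ) : ℝ :=
  (1 / (16 * Real.pi)) * ∫ x, ∫ y, n x * n y / dist x y

/-- Energy functional `𝓔[u] = T[u] − L[|u|²] − D[|u|²]`. -/
def Energy {m : ℕ} (V : E3 → ℝ) (u : E3 → Cd m) : ℝ :=
  Tkin u - Lpot V (fun x => ‖u x‖ ^ 2) - Dint (fun x => ‖u x‖ ^ 2)

/-- Condition (i): `V` is measurable, locally square integrable, and `V(x) → 0` as `|x| → ∞`. -/
def CondI (V : E3 → ℝ) : Prop :=
  Measurable V ∧ LocallyIntegrable (fun x => (V x) ^ 2) volume ∧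
    Tendsto V (cocompact E3) (𝓝 0)


open Set Metric
open scoped RealInnerProductSpace

instance CdMeasurableSpace (m : ℕ) : MeasurableSpace (Cd m) := borel _
instance CdBorelSpace (m : ℕ) : BorelSpace (Cd m) := ⟨rfl⟩

lemma gradSq_nonneg {m : ℕ} (u : E3 → Cd m) (x : E3) : 0 ≤ gradSq u x :=
  Finset.sum_nonneg fun i _ => sq_nonneg _

lemma hardy1d {F : Type*} [NormedAddCommGroup F] [InnerProductSpace ℝ F]
    {v v' : ℝ → F}
    (hv : ∀ r ∈ Ioi (0:ℝ), HasDerivAt v (v' r) r)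
    (hm : AEStronglyMeasurable v' (volume.restrict (Ioi (0:ℝ))))
    (hA : ∫⁻ r in Ioi (0:ℝ), ENNReal.ofReal (r^2 * ‖v r‖^2) < ∞) :
    ∫⁻ r in Ioi (0:ℝ), ENNReal.ofReal (‖v r‖^2) ≤
      4 * ∫⁻ r in Ioi (0:ℝ), ENNReal.ofReal (r^2 * ‖v' r‖^2) := by
  set T : ℝ≥0∞ := ∫⁻ r in Ioi (0:ℝ), ENNReal.ofReal (r^2 * ‖v' r‖^2) with hT
  rcases eq_or_ne T ∞ with h | hTne
  · rw [h]; simp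
  -- continuity of v on Ioi 0
  have hvc : ContinuousOn v (Ioi (0:ℝ)) := fun r hr => ((hv r hr).continuousAt).continuousWithinAt
  have hvm : AEStronglyMeasurable v (volume.restrict (Ioi (0:ℝ))) :=
    (hvc.aestronglyMeasurable measurableSet_Ioi)
  -- integrability of r^2 * ‖v' r‖^2 on Ioi 0
  have hDnn : ∀ r : ℝ, 0 ≤ r^2 * ‖v' r‖^2 := fun r => by positivity
  have hDm : AEStronglyMeasurable (fun r => r^2 * ‖v' r‖^2) (volume.restrict (Ioi (0:ℝ))) := by
    exact ((aemeasurable_id.pow_const 2).mul ((hm.norm.aemeasurable.pow_const 2))).aestronglyMeasurable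
  have intD : IntegrableOn (fun r => r^2 * ‖v' r‖^2) (Ioi (0:ℝ)) := by
    refine ⟨hDm, ?_⟩
    rw [hasFiniteIntegral_iff_ofReal (Eventually.of_forall hDnn)]
    exact hTne.lt_top
  set Tr : ℝ := ∫ r in Ioi (0:ℝ), r^2 * ‖v' r‖^2 with hTr
  have hTrnn : 0 ≤ Tr := setIntegral_nonneg measurableSet_Ioi (fun r _ => hDnn r)
  have hTeq : T = ENNReal.ofReal Tr :=
    (ofReal_integral_eq_lintegral_ofReal intD (Eventually.of_forall hDnn)).symm
  -- Step: key interval bound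
  have key : ∀ a b : ℝ, 0 < a → a ≤ b →
      ∫ r in Set.Ioc a b, ‖v r‖^2 ≤ 2 * (b * ‖v b‖^2) + 4 * Tr := by
    intro a b ha hab
    have hIcc : Set.Icc a b ⊆ Ioi (0:ℝ) := fun x hx => lt_of_lt_of_le ha hx.1
    have hIoc : Set.Ioc a b ⊆ Ioi (0:ℝ) := fun x hx => lt_of_lt_of_le ha hx.1.le
    have hvcI : ContinuousOn v (Set.Icc a b) := hvc.mono hIcc
    -- bound C on ‖v‖
    obtain ⟨C, hC⟩ := (isCompact_Icc (a := a) (b := b)).exists_bound_of_continuousOn hvcI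
    have hC0 : 0 ≤ C := le_trans (norm_nonneg _) (hC a (Set.left_mem_Icc.2 hab))
    -- FTC
    have hderiv : ∀ r ∈ Set.uIcc a b,
        HasDerivAt (fun r => r * ‖v r‖^2)
          (‖v r‖^2 + r * (2 * ⟪v r, v' r⟫)) r := by
      intro r hr
      rw [Set.uIcc_of_le hab] at hr
      have hr0 : r ∈ Ioi (0:ℝ) := hIcc hr
      have h1 : HasDerivAt (fun t => ‖v t‖^2) (2 * ⟪v r, v' r⟫) r := by
        have h0 := (hv r hr0).inner ℝ (hv r hr0)
        have h2 : (fun t => (⟪v t, v t⟫ : ℝ)) = fun t => ‖v t‖^2 := by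
          ext t; exact real_inner_self_eq_norm_sq (v t)
        rw [h2] at h0
        exact h0.congr_deriv (by rw [real_inner_comm]; ring)
      exact ((hasDerivAt_id' r).mul h1).congr_deriv (by simp)
    -- integrability of the derivative
    have hvmI : AEStronglyMeasurable v (volume.restrict (Set.Ioc a b)) :=
      ((hvc.mono hIoc).aestronglyMeasurable measurableSet_Ioc)
    have hmI : AEStronglyMeasurable v' (volume.restrict (Set.Ioc a b)) :=
      hm.mono_measure (Measure.restrict_mono hIoc le_rfl)
    have intD' : IntegrableOn (fun r => r^2 * ‖v' r‖^2) (Set.Ioc a b) :=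
      intD.mono_set hIoc
    have hinner_m : AEStronglyMeasurable (fun r => r * (2 * ⟪v r, v' r⟫))
        (volume.restrict (Set.Ioc a b)) := by
      exact (aemeasurable_id.mul
        (aemeasurable_const.mul (hvmI.inner hmI).aemeasurable)).aestronglyMeasurable
    have hptw : ∀ r ∈ Set.Ioc a b, |r * (2 * ⟪v r, v' r⟫)| ≤ C * (1 + r^2 * ‖v' r‖^2) := by
      intro r hr
      have hr0 : 0 < r := hIoc hr
      have h1 : |r * (2 * ⟪v r, v' r⟫)| ≤ r * (2 * (‖v r‖ * ‖v' r‖)) := by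
        rw [abs_mul, abs_of_pos hr0, abs_mul, abs_of_pos (by norm_num : (0:ℝ) < 2)]
        have := abs_real_inner_le_norm (v r) (v' r)
        nlinarith [hr0.le]
      have h2 : r * (2 * (‖v r‖ * ‖v' r‖)) ≤ C * (2 * (r * ‖v' r‖)) := by
        have hCr := hC r (Set.Ioc_subset_Icc_self hr)
        nlinarith [mul_nonneg (sub_nonneg.2 hCr) (mul_nonneg hr0.le (norm_nonneg (v' r)))]
      have h3 : C * (2 * (r * ‖v' r‖)) ≤ C * (1 + r^2 * ‖v' r‖^2) := by
        have : 2 * (r * ‖v' r‖) ≤ 1 + r^2 * ‖v' r‖^2 := by nlinarith [sq_nonneg (r * ‖v' r‖ - 1)]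
        nlinarith
      linarith
    have intInner : IntegrableOn (fun r => r * (2 * ⟪v r, v' r⟫)) (Set.Ioc a b) := by
      have hg : IntegrableOn (fun r => C * (1 + r^2 * ‖v' r‖^2)) (Set.Ioc a b) :=
        ((integrableOn_const measure_Ioc_lt_top.ne).add intD').const_mul C
      refine Integrable.mono' hg hinner_m ?_
      filter_upwards [ae_restrict_mem measurableSet_Ioc] with r hr
      rw [Real.norm_eq_abs]; exact hptw r hr
    have intNormSq : IntegrableOn (fun r => ‖v r‖^2) (Set.Ioc a b) := by
      have : IntegrableOn (fun r => ‖v r‖^2) (Set.Icc a b) :=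
        (hvcI.norm.pow 2).integrableOn_compact isCompact_Icc
      exact this.mono_set Set.Ioc_subset_Icc_self
    have hFTC : ∫ r in a..b, (‖v r‖^2 + r * (2 * ⟪v r, v' r⟫)) =
        b * ‖v b‖^2 - a * ‖v a‖^2 := by
      refine intervalIntegral.integral_eq_sub_of_hasDerivAt hderiv ?_
      rw [intervalIntegrable_iff_integrableOn_Ioc_of_le hab]
      exact intNormSq.add intInner
    -- now the estimates
    have hsplit : ∫ r in a..b, (‖v r‖^2 + r * (2 * ⟪v r, v' r⟫)) =
        (∫ r in Set.Ioc a b, ‖v r‖^2) + ∫ r in Set.Ioc a b, r * (2 * ⟪v r, v' r⟫) := by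
      rw [intervalIntegral.integral_of_le hab, integral_add intNormSq intInner]
    have habs : -(∫ r in Set.Ioc a b, r * (2 * ⟪v r, v' r⟫)) ≤
        ∫ r in Set.Ioc a b, ((1/2) * ‖v r‖^2 + 2 * (r^2 * ‖v' r‖^2)) := by
      have h1 : -(∫ r in Set.Ioc a b, r * (2 * ⟪v r, v' r⟫)) =
          ∫ r in Set.Ioc a b, -(r * (2 * ⟪v r, v' r⟫)) := (integral_neg _).symm
      rw [h1]
      refine setIntegral_mono_on intInner.neg
        ((intNormSq.const_mul _).add (intD'.const_mul _)) measurableSet_Ioc ?_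
      intro r hr
      have h2 := hptw r hr
      have h3 : |r * (2 * ⟪v r, v' r⟫)| ≤ (1/2) * ‖v r‖^2 + 2 * (r^2 * ‖v' r‖^2) := by
        have hr0 : 0 < r := lt_of_lt_of_le ha hr.1.le
        have h4 : |r * (2 * ⟪v r, v' r⟫)| ≤ r * (2 * (‖v r‖ * ‖v' r‖)) := by
          rw [abs_mul, abs_of_pos hr0, abs_mul, abs_of_pos (by norm_num : (0:ℝ) < 2)]
          have := abs_real_inner_le_norm (v r) (v' r)
          nlinarith [hr0.le]
        have h5 : r * (2 * (‖v r‖ * ‖v' r‖)) ≤ (1/2) * ‖v r‖^2 + 2 * (r^2 * ‖v' r‖^2) := by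
          nlinarith [sq_nonneg (‖v r‖ - 2 * (r * ‖v' r‖)), sq_nonneg (r * ‖v' r‖), norm_nonneg (v r), norm_nonneg (v' r), hr0.le]
        linarith [neg_abs_le (r * (2 * ⟪v r, v' r⟫))]
      linarith [neg_abs_le (r * (2 * ⟪v r, v' r⟫))]
    have hsplit2 : ∫ r in Set.Ioc a b, ((1/2) * ‖v r‖^2 + 2 * (r^2 * ‖v' r‖^2)) =
        (1/2) * (∫ r in Set.Ioc a b, ‖v r‖^2) + 2 * ∫ r in Set.Ioc a b, (r^2 * ‖v' r‖^2) := by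
      rw [integral_add (intNormSq.const_mul _) (intD'.const_mul _),
        integral_const_mul, integral_const_mul]
    have hTb : ∫ r in Set.Ioc a b, (r^2 * ‖v' r‖^2) ≤ Tr := by
      refine setIntegral_mono_set intD (Eventually.of_forall (fun r => hDnn r)) ?_
      exact HasSubset.Subset.eventuallyLE hIoc
    have hva : 0 ≤ a * ‖v a‖^2 := by positivity
    nlinarith [hFTC, hsplit, habs, hsplit2, hTb]
  -- boundary decay along a subsequence
  have hbnd : ∀ δ : ℝ, 0 < δ → ∀ N₀ : ℝ, 1 ≤ N₀ → ∃ b, N₀ ≤ b ∧ b * ‖v b‖^2 < δ := by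
    intro δ hδ N₀ hN₀
    by_contra hcon
    push_neg at hcon
    have hN₀0 : (0:ℝ) < N₀ := lt_of_lt_of_le one_pos hN₀
    have hineq : ∀ r ∈ Ioi N₀, ENNReal.ofReal (δ * N₀) ≤ ENNReal.ofReal (r^2 * ‖v r‖^2) := by
      intro r hr
      have hr' : N₀ ≤ r := (le_of_lt hr)
      have h1 := hcon r hr'
      apply ENNReal.ofReal_le_ofReal
      nlinarith [norm_nonneg (v r), sq_nonneg (‖v r‖)]
    have hlow : ∫⁻ r in Ioi N₀, ENNReal.ofReal (δ * N₀) ≤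
        ∫⁻ r in Ioi N₀, ENNReal.ofReal (r^2 * ‖v r‖^2) :=
      setLIntegral_mono' measurableSet_Ioi hineq
    rw [setLIntegral_const] at hlow
    have hvol : volume (Ioi N₀) = ∞ := Real.volume_Ioi
    rw [hvol, ENNReal.mul_top (by simp [ENNReal.ofReal_eq_zero, not_le]; positivity)] at hlow
    have hsub : ∫⁻ r in Ioi N₀, ENNReal.ofReal (r^2 * ‖v r‖^2) ≤
        ∫⁻ r in Ioi (0:ℝ), ENNReal.ofReal (r^2 * ‖v r‖^2) :=
      lintegral_mono_set (Set.Ioi_subset_Ioi hN₀0.le)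
    exact absurd (le_trans hlow hsub) (by simpa using hA.ne)
  -- per-term bound
  set g : ℝ → ℝ≥0∞ := fun r => ENNReal.ofReal (‖v r‖^2) with hg
  have hterm : ∀ n : ℕ, ∫⁻ r in Set.Ioc (1/((n:ℝ)+1)) ((n:ℝ)+1), g r ≤
      ENNReal.ofReal (4 * Tr) := by
    intro n
    refine ENNReal.le_of_forall_pos_le_add (fun ε hε _ => ?_)
    set a : ℝ := 1/((n:ℝ)+1) with hadef
    have ha : 0 < a := by positivity
    obtain ⟨b, hb1, hb2⟩ := hbnd ((ε:ℝ)/2) (by positivity) (max ((n:ℝ)+1) 1) (le_max_right _ _)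
    have hb1' : (n:ℝ)+1 ≤ b := le_trans (le_max_left _ _) hb1
    have hab : a ≤ b := by
      have h1 : a ≤ 1 := by
        rw [hadef, div_le_one (by positivity)]; linarith [Nat.cast_nonneg (α := ℝ) n]
      linarith [le_trans (le_max_right ((n:ℝ)+1) 1) hb1]
    have hIcc : Set.Icc a b ⊆ Ioi (0:ℝ) := fun x hx => lt_of_lt_of_le ha hx.1
    have intv : IntegrableOn (fun r => ‖v r‖^2) (Set.Ioc a b) := by
      have : IntegrableOn (fun r => ‖v r‖^2) (Set.Icc a b) :=
        (((hvc.mono hIcc).norm.pow 2)).integrableOn_compact isCompact_Icc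
      exact this.mono_set Set.Ioc_subset_Icc_self
    calc ∫⁻ r in Set.Ioc a ((n:ℝ)+1), g r
        ≤ ∫⁻ r in Set.Ioc a b, g r := lintegral_mono_set (Set.Ioc_subset_Ioc le_rfl hb1')
      _ = ENNReal.ofReal (∫ r in Set.Ioc a b, ‖v r‖^2) :=
          (ofReal_integral_eq_lintegral_ofReal intv
            (Eventually.of_forall (fun r => by positivity))).symm
      _ ≤ ENNReal.ofReal (4 * Tr + (ε:ℝ)) := by
          apply ENNReal.ofReal_le_ofReal
          have := key a b ha hab
          linarith
      _ ≤ ENNReal.ofReal (4 * Tr) + ε := by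
          rw [ENNReal.ofReal_add (by positivity) (by positivity)]
          simp
  -- assemble via monotone convergence
  have hcover : ∫⁻ r in Ioi (0:ℝ), g r ≤ ENNReal.ofReal (4 * Tr) := by
    set ν := volume.restrict (Ioi (0:ℝ)) with hν
    set f : ℕ → ℝ → ℝ≥0∞ := fun n => (Set.Ioc (1/((n:ℝ)+1)) ((n:ℝ)+1)).indicator g with hf
    have hgm : AEMeasurable g ν :=
      ENNReal.measurable_ofReal.comp_aemeasurable ((hvm.norm.aemeasurable).pow_const 2)
    have hfm : ∀ n, AEMeasurable (f n) ν := fun n => hgm.indicator measurableSet_Ioc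
    have hmono : ∀ᵐ r ∂ν, Monotone fun n => f n r := by
      refine Eventually.of_forall (fun r => ?_)
      intro i j hij
      refine Set.indicator_le_indicator_of_subset (Set.Ioc_subset_Ioc ?_ ?_) (fun _ => zero_le) r
      · apply div_le_div_of_nonneg_left one_pos.le (by positivity)
        exact_mod_cast add_le_add_left (Nat.cast_le.2 hij) 1
      · exact_mod_cast add_le_add_left (Nat.cast_le.2 hij) 1
    have hsup : ∀ᵐ r ∂ν, (⨆ n, f n r) = g r := by
      filter_upwards [ae_restrict_mem measurableSet_Ioi] with r hr
      refine le_antisymm (iSup_le (fun n => Set.indicator_le_self _ _ r)) ?_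
      set n := ⌈r⌉₊ + ⌈1/r⌉₊ with hn
      have hmem : r ∈ Set.Ioc (1/((n:ℝ)+1)) ((n:ℝ)+1) := by
        constructor
        · rw [div_lt_iff₀ (by positivity)]
          have h1 : 1/r ≤ (⌈1/r⌉₊ : ℝ) := Nat.le_ceil _
          have h2 : (⌈1/r⌉₊:ℝ) ≤ (n:ℝ) := by
            rw [hn]; push_cast; linarith [Nat.cast_nonneg (α := ℝ) ⌈r⌉₊]
          have hr0 : (0:ℝ) < r := hr
          rw [div_le_iff₀ hr0] at h1
          nlinarith
        · have h1 : r ≤ (⌈r⌉₊ : ℝ) := Nat.le_ceil _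
          have h2 : (⌈r⌉₊:ℝ) ≤ (n:ℝ) := by
            rw [hn]; push_cast; linarith [Nat.cast_nonneg (α := ℝ) ⌈1/r⌉₊]
          linarith
      refine le_iSup_of_le n ?_
      simp only [hf]
      rw [Set.indicator_of_mem hmem]
    have h1 : ∫⁻ r, g r ∂ν = ⨆ n, ∫⁻ r, f n r ∂ν := by
      rw [show (∫⁻ r, g r ∂ν) = ∫⁻ r, ⨆ n, f n r ∂ν from
        lintegral_congr_ae (hsup.mono fun r h => h.symm)]
      exact lintegral_iSup' hfm hmono
    rw [show (∫⁻ r in Ioi (0:ℝ), g r) = ∫⁻ r, g r ∂ν from rfl, h1]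
    refine iSup_le (fun n => ?_)
    have h2 : ∫⁻ r, f n r ∂ν = ∫⁻ r in Set.Ioc (1/((n:ℝ)+1)) ((n:ℝ)+1), g r := by
      simp only [hf]
      have hss : Set.Ioc (1/((n:ℝ)+1)) ((n:ℝ)+1) ∩ Ioi (0:ℝ) =
          Set.Ioc (1/((n:ℝ)+1)) ((n:ℝ)+1) :=
        Set.inter_eq_left.2 (fun x hx => lt_of_lt_of_le (by positivity) hx.1.le)
      rw [lintegral_indicator measurableSet_Ioc, hν,
        Measure.restrict_restrict measurableSet_Ioc, hss]
    rw [h2]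
    exact hterm n
  calc ∫⁻ r in Ioi (0:ℝ), ENNReal.ofReal (‖v r‖^2) ≤ ENNReal.ofReal (4 * Tr) := hcover
    _ = 4 * ENNReal.ofReal Tr := by
        rw [ENNReal.ofReal_mul (by norm_num)]; norm_num
    _ = 4 * T := by rw [hTeq]


lemma cs_dir {m : ℕ} (L : E3 →L[ℝ] Cd m) (ω : E3) (hω : ‖ω‖ = 1) :
    ‖L ω‖^2 ≤ ∑ i : Fin 3, ‖L (EuclideanSpace.single i (1:ℝ))‖^2 := by
  have hdecomp : L ω = ∑ i : Fin 3, ω i • L (EuclideanSpace.single i (1:ℝ)) := by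
    have h0 : ω = ∑ i : Fin 3, ω i • EuclideanSpace.single i (1:ℝ) := by
      ext j
      have : (∑ i : Fin 3, ω i • EuclideanSpace.single i (1:ℝ)) j =
          ∑ i : Fin 3, (ω i • EuclideanSpace.single i (1:ℝ)) j := by
        rw [WithLp.ofLp_sum]; exact Finset.sum_apply j Finset.univ _
      rw [this]
      simp [EuclideanSpace.single_apply]
    conv_lhs => rw [h0]
    rw [map_sum]
    exact Finset.sum_congr rfl fun i _ => by rw [_root_.map_smul]
  have h1 : ‖L ω‖ ≤ ∑ i : Fin 3, |ω i| * ‖L (EuclideanSpace.single i (1:ℝ))‖ := by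
    rw [hdecomp]
    refine le_trans (norm_sum_le _ _) (le_of_eq (Finset.sum_congr rfl fun i _ => ?_))
    rw [norm_smul, Real.norm_eq_abs]
  have h2 : (∑ i : Fin 3, |ω i| * ‖L (EuclideanSpace.single i (1:ℝ))‖)^2 ≤
      (∑ i : Fin 3, |ω i|^2) * ∑ i : Fin 3, ‖L (EuclideanSpace.single i (1:ℝ))‖^2 :=
    Finset.sum_mul_sq_le_sq_mul_sq _ _ _
  have h3 : ∑ i : Fin 3, |ω i|^2 = 1 := by
    have := EuclideanSpace.norm_eq ω
    rw [hω] at this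
    have h4 : ∑ i : Fin 3, ‖ω i‖^2 = 1 := by
      have h5 := congrArg (fun t : ℝ => t^2) this.symm
      simp only [one_pow] at h5
      rw [Real.sq_sqrt (Finset.sum_nonneg fun i _ => sq_nonneg ‖ω i‖)] at h5
      exact h5
    simpa [Real.norm_eq_abs] using h4
  calc ‖L ω‖^2 ≤ (∑ i : Fin 3, |ω i| * ‖L (EuclideanSpace.single i (1:ℝ))‖)^2 :=
        pow_le_pow_left₀ (norm_nonneg _) h1 2
    _ ≤ _ := by rw [h3, one_mul] at h2; exact h2

lemma polar (F : E3 → ℝ≥0∞) (hF : Measurable F) :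
    ∫⁻ x, F x = ∫⁻ ω : sphere (0:E3) 1, ∫⁻ r in Ioi (0:ℝ),
      ENNReal.ofReal (r^2) * F (r • (ω:E3)) ∂volume ∂(volume : Measure E3).toSphere := by
  have hdim : Module.finrank ℝ E3 = 3 := finrank_euclideanSpace_fin
  set μ : Measure E3 := volume with hμ
  have mp := μ.measurePreserving_homeomorphUnitSphereProd
  rw [hdim] at mp
  set f : sphere (0:E3) 1 × Ioi (0:ℝ) → ℝ≥0∞ := fun p => F (p.2.1 • p.1.1) with hf
  have hfm : Measurable f := by
    apply hF.comp
    exact Continuous.measurable <|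
      (continuous_subtype_val.comp continuous_snd).smul (continuous_subtype_val.comp continuous_fst)
  have h1 : ∫⁻ x, F x ∂μ = ∫⁻ x : ({(0:E3)}ᶜ : Set E3), F x ∂(μ.comap Subtype.val) := by
    rw [lintegral_subtype_comap (measurableSet_singleton (0:E3)).compl,
      restrict_compl_singleton]
  have h2 : ∫⁻ x : ({(0:E3)}ᶜ : Set E3), F x ∂(μ.comap Subtype.val)
      = ∫⁻ p, f p ∂(μ.toSphere.prod (Measure.volumeIoiPow 2)) := by
    rw [← mp.lintegral_comp hfm]
    refine lintegral_congr fun x => ?_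
    simp only [hf, homeomorphUnitSphereProd_apply_fst_coe, homeomorphUnitSphereProd_apply_snd_coe]
    rw [smul_inv_smul₀ (norm_ne_zero_iff.2 x.2)]
  have h3 : ∫⁻ p, f p ∂(μ.toSphere.prod (Measure.volumeIoiPow 2))
      = ∫⁻ ω : sphere (0:E3) 1, ∫⁻ r : Ioi (0:ℝ), f (ω, r) ∂(Measure.volumeIoiPow 2) ∂μ.toSphere :=
    lintegral_prod f hfm.aemeasurable
  have h4 : ∀ ω : sphere (0:E3) 1, ∫⁻ r : Ioi (0:ℝ), f (ω, r) ∂(Measure.volumeIoiPow 2)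
      = ∫⁻ r in Ioi (0:ℝ), ENNReal.ofReal (r^2) * F (r • (ω:E3)) ∂volume := by
    intro ω
    have hd : Measurable fun r : Ioi (0:ℝ) => ENNReal.ofReal (r.1^2) :=
      (measurable_subtype_coe.pow_const 2).ennreal_ofReal
    have hg : Measurable fun r : Ioi (0:ℝ) => f (ω, r) := hfm.comp measurable_prodMk_left
    rw [Measure.volumeIoiPow, lintegral_withDensity_eq_lintegral_mul _ hd hg]
    exact lintegral_subtype_comap measurableSet_Ioi
      (fun r : ℝ => ENNReal.ofReal (r^2) * F (r • (ω:E3)))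
  rw [h1, h2, h3]
  exact lintegral_congr fun ω => h4 ω

set_option maxHeartbeats 1000000 in
lemma hardy3d {m : ℕ} {u : E3 → Cd m} (hu : Differentiable ℝ u)
    (hA : ∫⁻ x, ENNReal.ofReal (‖u x‖^2) < ∞) :
    ∫⁻ x, ENNReal.ofReal (‖u x‖^2 / ‖x‖^2) ≤ 4 * ∫⁻ x, ENNReal.ofReal (gradSq u x) := by
  have hum : Measurable u := hu.continuous.measurable
  have hgm : Measurable (gradSq u) := by
    apply Finset.measurable_sum
    intro i _
    exact (measurable_fderiv_apply_const ℝ u (EuclideanSpace.single i (1:ℝ))).norm.pow_const 2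
  set σ := (volume : Measure E3).toSphere with hσ
  set F1 : E3 → ℝ≥0∞ := fun x => ENNReal.ofReal (‖u x‖^2 / ‖x‖^2) with hF1
  set F0 : E3 → ℝ≥0∞ := fun x => ENNReal.ofReal (‖u x‖^2) with hF0
  set Fg : E3 → ℝ≥0∞ := fun x => ENNReal.ofReal (gradSq u x) with hFg
  have hF1m : Measurable F1 :=
    ((hum.norm.pow_const 2).div (measurable_norm.pow_const 2)).ennreal_ofReal
  have hF0m : Measurable F0 := (hum.norm.pow_const 2).ennreal_ofReal
  have hFgm : Measurable Fg := hgm.ennreal_ofReal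
  have hsm : Continuous fun p : sphere (0:E3) 1 × ℝ => p.2 • (p.1:E3) :=
    continuous_snd.smul (continuous_subtype_val.comp continuous_fst)
  have hprod0 : Measurable fun p : sphere (0:E3) 1 × ℝ =>
      ENNReal.ofReal (p.2^2) * F0 (p.2 • (p.1:E3)) :=
    ((measurable_snd.pow_const 2).ennreal_ofReal).mul (hF0m.comp hsm.measurable)
  have hprodg : Measurable fun p : sphere (0:E3) 1 × ℝ =>
      ENNReal.ofReal (p.2^2) * Fg (p.2 • (p.1:E3)) :=
    ((measurable_snd.pow_const 2).ennreal_ofReal).mul (hFgm.comp hsm.measurable)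
  have hmeas0 : Measurable fun ω : sphere (0:E3) 1 =>
      ∫⁻ r in Ioi (0:ℝ), ENNReal.ofReal (r^2) * F0 (r • (ω:E3)) ∂volume :=
    hprod0.lintegral_prod_right'
  have hmeasg : Measurable fun ω : sphere (0:E3) 1 =>
      ∫⁻ r in Ioi (0:ℝ), ENNReal.ofReal (r^2) * Fg (r • (ω:E3)) ∂volume :=
    hprodg.lintegral_prod_right'
  have hA' : ∫⁻ ω : sphere (0:E3) 1,
      (∫⁻ r in Ioi (0:ℝ), ENNReal.ofReal (r^2) * F0 (r • (ω:E3)) ∂volume) ∂σ < ∞ := by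
    rw [hσ, ← polar F0 hF0m]; exact hA
  have hae : ∀ᵐ ω : sphere (0:E3) 1 ∂σ,
      (∫⁻ r in Ioi (0:ℝ), ENNReal.ofReal (r^2) * F0 (r • (ω:E3)) ∂volume) < ∞ :=
    ae_lt_top hmeas0 hA'.ne
  rw [show (∫⁻ x, ENNReal.ofReal (‖u x‖^2 / ‖x‖^2)) = ∫⁻ x, F1 x from rfl,
    show (∫⁻ x, ENNReal.ofReal (gradSq u x)) = ∫⁻ x, Fg x from rfl,
    polar F1 hF1m, polar Fg hFgm, ← hσ]
  rw [← lintegral_const_mul' 4 _ (by norm_num)]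
  refine lintegral_mono_ae ?_
  filter_upwards [hae] with ω hωA
  -- per-direction Hardy
  have hω1 : ‖(ω:E3)‖ = 1 := mem_sphere_zero_iff_norm.1 ω.2
  set v : ℝ → Cd m := fun r => u (r • (ω:E3)) with hvdef
  set v' : ℝ → Cd m := fun r => fderiv ℝ u (r • (ω:E3)) (ω:E3) with hv'def
  have hv : ∀ r ∈ Ioi (0:ℝ), HasDerivAt v (v' r) r := by
    intro r _
    have h1 : HasDerivAt (fun r : ℝ => r • (ω:E3)) ((ω:E3)) r := by
      simpa using (hasDerivAt_id r).smul_const ((ω:E3))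
    exact ((hu (r • (ω:E3))).hasFDerivAt).comp_hasDerivAt r h1
  have hm : AEStronglyMeasurable v' (volume.restrict (Ioi (0:ℝ))) := by
    refine Measurable.aestronglyMeasurable ?_
    exact (measurable_fderiv_apply_const ℝ u ((ω:E3))).comp
      (Continuous.measurable (continuous_id.smul continuous_const))
  have heq0 : ∫⁻ r in Ioi (0:ℝ), ENNReal.ofReal (r^2 * ‖v r‖^2) ∂volume =
      ∫⁻ r in Ioi (0:ℝ), ENNReal.ofReal (r^2) * F0 (r • (ω:E3)) ∂volume := by
    refine setLIntegral_congr_fun measurableSet_Ioi (fun r hr => ?_)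
    simp only [hF0]
    rw [ENNReal.ofReal_mul (by positivity)]
  have hA1 : ∫⁻ r in Ioi (0:ℝ), ENNReal.ofReal (r^2 * ‖v r‖^2) ∂volume < ∞ := by
    rw [heq0]; exact hωA
  have hH := hardy1d hv hm hA1
  have heq1 : ∫⁻ r in Ioi (0:ℝ), ENNReal.ofReal (r^2) * F1 (r • (ω:E3)) ∂volume =
      ∫⁻ r in Ioi (0:ℝ), ENNReal.ofReal (‖v r‖^2) ∂volume := by
    refine setLIntegral_congr_fun measurableSet_Ioi (fun r hr => ?_)
    have hr0 : (0:ℝ) < r := hr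
    have hnorm : ‖r • (ω:E3)‖ = r := by
      rw [norm_smul, hω1, Real.norm_eq_abs, abs_of_pos hr0, mul_one]
    simp only [hF1]
    rw [hnorm, ← ENNReal.ofReal_mul (by positivity)]
    congr 1
    field_simp
    rfl
  have hgb : ∫⁻ r in Ioi (0:ℝ), ENNReal.ofReal (r^2 * ‖v' r‖^2) ∂volume ≤
      ∫⁻ r in Ioi (0:ℝ), ENNReal.ofReal (r^2) * Fg (r • (ω:E3)) ∂volume := by
    refine setLIntegral_mono' measurableSet_Ioi fun r hr => ?_
    simp only [hFg]
    rw [← ENNReal.ofReal_mul (by positivity)]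
    apply ENNReal.ofReal_le_ofReal
    have := cs_dir (fderiv ℝ u (r • (ω:E3))) ((ω:E3)) hω1
    have h2 : ‖v' r‖^2 ≤ gradSq u (r • (ω:E3)) := this
    nlinarith [sq_nonneg r]
  calc ∫⁻ r in Ioi (0:ℝ), ENNReal.ofReal (r^2) * F1 (r • (ω:E3)) ∂volume
      = ∫⁻ r in Ioi (0:ℝ), ENNReal.ofReal (‖v r‖^2) ∂volume := heq1
    _ ≤ 4 * ∫⁻ r in Ioi (0:ℝ), ENNReal.ofReal (r^2 * ‖v' r‖^2) ∂volume := hH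
    _ ≤ 4 * ∫⁻ r in Ioi (0:ℝ), ENNReal.ofReal (r^2) * Fg (r • (ω:E3)) ∂volume :=
        mul_le_mul_right hgb 4

lemma hardy3d_dist {m : ℕ} {u : E3 → Cd m} (hu : Differentiable ℝ u)
    (hA : ∫⁻ x, ENNReal.ofReal (‖u x‖^2) < ∞) (z : E3) :
    ∫⁻ x, ENNReal.ofReal (‖u x‖^2 / dist x z ^ 2) ≤
      4 * ∫⁻ x, ENNReal.ofReal (gradSq u x) := by
  set w : E3 → Cd m := fun y => u (y + z) with hw
  have hfd : ∀ y : E3, HasFDerivAt w (fderiv ℝ u (y + z)) y := by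
    intro y
    have h1 : HasFDerivAt (fun y : E3 => y + z) (ContinuousLinearMap.id ℝ E3) y :=
      (hasFDerivAt_id y).add_const z
    have h2 := ((hu (y + z)).hasFDerivAt).comp y h1
    rw [ContinuousLinearMap.comp_id] at h2; exact h2
  have hwd : Differentiable ℝ w := fun y => (hfd y).differentiableAt
  have hgrad : ∀ y, gradSq w y = gradSq u (y + z) := by
    intro y
    unfold gradSq
    rw [(hfd y).fderiv]
  have hA' : ∫⁻ y, ENNReal.ofReal (‖w y‖^2) < ∞ := by
    rw [show (fun y => ENNReal.ofReal (‖w y‖^2)) = fun y =>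
      (fun x => ENNReal.ofReal (‖u x‖^2)) (y + z) from rfl,
      lintegral_add_right_eq_self (fun x => ENNReal.ofReal (‖u x‖^2)) z]
    exact hA
  calc ∫⁻ x, ENNReal.ofReal (‖u x‖^2 / dist x z ^ 2)
      = ∫⁻ y, ENNReal.ofReal (‖u (y + z)‖^2 / dist (y + z) z ^ 2) :=
        (lintegral_add_right_eq_self (fun x => ENNReal.ofReal (‖u x‖^2 / dist x z ^ 2)) z).symm
    _ = ∫⁻ y, ENNReal.ofReal (‖w y‖^2 / ‖y‖^2) := by
        refine lintegral_congr fun y => ?_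
        rw [dist_eq_norm, add_sub_cancel_right]
    _ ≤ 4 * ∫⁻ y, ENNReal.ofReal (gradSq w y) := hardy3d hwd hA'
    _ = 4 * ∫⁻ y, ENNReal.ofReal (gradSq u (y + z)) := by
        congr 1; exact lintegral_congr fun y => by rw [hgrad]
    _ = 4 * ∫⁻ x, ENNReal.ofReal (gradSq u x) := by
        congr 1
        exact lintegral_add_right_eq_self (fun x => ENNReal.ofReal (gradSq u x)) z


set_option maxHeartbeats 1000000

/-- There are universal constants `C, C' > 0` such that for every
`u ∈ H¹(ℝ³,ℂ^m)`, with `n = |u|²` and `N = ‖u‖₂²`, the interaction energy `D[n]` is finite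
and satisfies `D[n] ≤ (1/4) T[u] + C N³`, and also `D[n] ≤ C' N^{3/2} T[u]^{1/2}`. -/
theorem Dint_bound_by_kinetic :
    ∃ C > (0 : ℝ), ∃ C' > (0 : ℝ), ∀ (m : ℕ) (u : E3 → Cd m), MemH1 u →
      Integrable (fun p : E3 × E3 => ‖u p.1‖ ^ 2 * ‖u p.2‖ ^ 2 / dist p.1 p.2) ∧
      Dint (fun x => ‖u x‖ ^ 2) ≤ (1 / 4) * Tkin u + C * (∫ x, ‖u x‖ ^ 2) ^ 3 ∧
      Dint (fun x => ‖u x‖ ^ 2) ≤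
        C' * (∫ x, ‖u x‖ ^ 2) ^ ((3 : ℝ) / 2) * (Tkin u) ^ ((1 : ℝ) / 2) := by
  refine ⟨1, one_pos, 1, one_pos, ?_⟩
  intro m u hu
  obtain ⟨hdiff, hint2, hintg⟩ := hu
  set n : E3 → ℝ := fun x => ‖u x‖^2 with hndef
  have hnn : ∀ x, 0 ≤ n x := fun x => sq_nonneg _
  have hum : Measurable u := hdiff.continuous.measurable
  have hn : Measurable n := hum.norm.pow_const 2
  have hgm : Measurable (gradSq u) := by
    apply Finset.measurable_sum; intro i _
    exact (measurable_fderiv_apply_const ℝ u _).norm.pow_const 2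
  set N : ℝ := ∫ x, n x with hN
  set G2 : ℝ := ∫ x, gradSq u x with hG2
  have hNnn : 0 ≤ N := integral_nonneg hnn
  have hG2nn : 0 ≤ G2 := integral_nonneg (gradSq_nonneg u)
  have h𝒩 : ∫⁻ x, ENNReal.ofReal (n x) = ENNReal.ofReal N :=
    (ofReal_integral_eq_lintegral_ofReal hint2 (Eventually.of_forall hnn)).symm
  have hG : ∫⁻ x, ENNReal.ofReal (gradSq u x) = ENNReal.ofReal G2 :=
    (ofReal_integral_eq_lintegral_ofReal hintg (Eventually.of_forall (gradSq_nonneg u))).symm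
  have hAfin : ∫⁻ x, ENNReal.ofReal (‖u x‖^2) < ∞ := by
    rw [show (fun x => ENNReal.ofReal (‖u x‖^2)) = fun x => ENNReal.ofReal (n x) from rfl, h𝒩]
    exact ENNReal.ofReal_lt_top
  set M : ℝ≥0∞ := (ENNReal.ofReal N) ^ ((1:ℝ)/2) * (4 * ENNReal.ofReal G2) ^ ((1:ℝ)/2) with hM
  have hMne : M ≠ ∞ := by
    apply ENNReal.mul_ne_top
    · exact (ENNReal.rpow_lt_top_of_nonneg (by norm_num) ENNReal.ofReal_ne_top).ne
    · exact (ENNReal.rpow_lt_top_of_nonneg (by norm_num)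
        (ENNReal.mul_ne_top (by norm_num) ENNReal.ofReal_ne_top)).ne
  -- Hardy with center x
  have hHz : ∀ x : E3, ∫⁻ y, ENNReal.ofReal (n y / dist x y ^ 2) ≤ 4 * ENNReal.ofReal G2 := by
    intro x
    have h1 := hardy3d_dist hdiff hAfin x
    rw [hG] at h1
    refine le_trans (le_of_eq ?_) h1
    exact lintegral_congr fun y => by rw [dist_comm]
  -- Cauchy–Schwarz for the inner integral
  have hdm : ∀ x : E3, Measurable (fun y => dist x y) := fun x =>
    measurable_const.dist measurable_id
  have hCS : ∀ x : E3, ∫⁻ y, ENNReal.ofReal (n y / dist x y) ≤ M := by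
    intro x
    have hconj : Real.HolderConjugate 2 2 := Real.HolderConjugate.two_two
    set f : E3 → ℝ≥0∞ := fun y => (ENNReal.ofReal (n y)) ^ ((1:ℝ)/2) with hfdef
    set g : E3 → ℝ≥0∞ := fun y => (ENNReal.ofReal (n y / dist x y ^ 2)) ^ ((1:ℝ)/2) with hgdef
    have hfm : AEMeasurable f volume := (hn.ennreal_ofReal.pow_const _).aemeasurable
    have hgm' : AEMeasurable g volume :=
      (((hn.div ((hdm x).pow_const 2)).ennreal_ofReal).pow_const _).aemeasurable
    have hfg : ∀ y, ENNReal.ofReal (n y / dist x y) = f y * g y := by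
      intro y
      simp only [hfdef, hgdef]
      rw [← ENNReal.mul_rpow_of_nonneg _ _ (by norm_num : (0:ℝ) ≤ 1/2),
        ← ENNReal.ofReal_mul (hnn y)]
      have h2 : n y * (n y / dist x y ^ 2) = (n y / dist x y)^2 := by
        rcases eq_or_ne (dist x y) 0 with h | h
        · simp [h]
        · field_simp
      rw [h2, show ((n y / dist x y)^2) = (n y/dist x y)^(2:ℕ) from rfl,
        ENNReal.ofReal_pow (div_nonneg (hnn y) dist_nonneg),
        ← ENNReal.rpow_natCast, ← ENNReal.rpow_mul]
      norm_num
    have hf2 : ∀ y, f y ^ (2:ℝ) = ENNReal.ofReal (n y) := by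
      intro y; simp only [hfdef]
      rw [← ENNReal.rpow_mul]; norm_num
    have hg2 : ∀ y, g y ^ (2:ℝ) = ENNReal.ofReal (n y / dist x y ^ 2) := by
      intro y; simp only [hgdef]
      rw [← ENNReal.rpow_mul]; norm_num
    calc ∫⁻ y, ENNReal.ofReal (n y / dist x y) = ∫⁻ y, f y * g y := lintegral_congr hfg
      _ ≤ (∫⁻ y, f y ^ (2:ℝ)) ^ ((1:ℝ)/2) * (∫⁻ y, g y ^ (2:ℝ)) ^ ((1:ℝ)/2) :=
          ENNReal.lintegral_mul_le_Lp_mul_Lq volume hconj hfm hgm'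
      _ ≤ M := by
          rw [lintegral_congr hf2, lintegral_congr hg2, h𝒩, hM]
          exact mul_le_mul_right (ENNReal.rpow_le_rpow (hHz x) (by norm_num)) _
  -- product integrability
  have hPm : Measurable (fun p : E3 × E3 => n p.1 * n p.2 / dist p.1 p.2) :=
    ((hn.comp measurable_fst).mul (hn.comp measurable_snd)).div measurable_dist
  have hiter : ∫⁻ p : E3 × E3, ENNReal.ofReal (n p.1 * n p.2 / dist p.1 p.2) ≤
      ENNReal.ofReal N * M := by
    rw [Measure.volume_eq_prod, lintegral_prod _ hPm.ennreal_ofReal.aemeasurable]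
    calc ∫⁻ x, ∫⁻ y, ENNReal.ofReal (n x * n y / dist x y)
        ≤ ∫⁻ x, ENNReal.ofReal (n x) * M := by
          refine lintegral_mono fun x => ?_
          have h1 : ∀ y, ENNReal.ofReal (n x * n y / dist x y) =
              ENNReal.ofReal (n x) * ENNReal.ofReal (n y / dist x y) := fun y => by
            rw [mul_div_assoc, ENNReal.ofReal_mul (hnn x)]
          rw [lintegral_congr h1, lintegral_const_mul' _ _ ENNReal.ofReal_ne_top]
          exact mul_le_mul_right (hCS x) _
      _ = ENNReal.ofReal N * M := by
          rw [lintegral_mul_const' M _ hMne, h𝒩]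
  have hint_prod : Integrable (fun p : E3 × E3 => n p.1 * n p.2 / dist p.1 p.2) := by
    refine ⟨hPm.aestronglyMeasurable, ?_⟩
    rw [hasFiniteIntegral_iff_ofReal (Eventually.of_forall fun p => by positivity)]
    exact lt_of_le_of_lt hiter
      (ENNReal.mul_lt_top ENNReal.ofReal_lt_top hMne.lt_top)
  refine ⟨hint_prod, ?_⟩
  -- real-valued bound on the iterated integral
  have hinner_le : ∀ x : E3, ∫ y, n y / dist x y ≤ M.toReal := by
    intro x
    have hmeas : AEStronglyMeasurable (fun y => n y / dist x y) volume :=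
      (hn.div (hdm x)).aestronglyMeasurable
    rw [integral_eq_lintegral_of_nonneg_ae
      (Eventually.of_forall fun y => by positivity) hmeas]
    exact ENNReal.toReal_mono hMne (hCS x)
  have hJ : ∫ x, ∫ y, n x * n y / dist x y ≤ N * M.toReal := by
    have hMt0 : 0 ≤ M.toReal := ENNReal.toReal_nonneg
    refine le_trans (integral_mono_of_nonneg ?_ (hint2.mul_const M.toReal) ?_) ?_
    · exact Eventually.of_forall fun x => integral_nonneg fun y => by positivity
    · refine Eventually.of_forall fun x => ?_
      simp only [mul_div_assoc]
      rw [integral_const_mul]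
      exact mul_le_mul_of_nonneg_left (hinner_le x) (hnn x)
    · rw [integral_mul_const]
  -- numeric endgame
  set s := Real.sqrt N with hs
  set t := Real.sqrt G2 with ht
  have hs2 : s^2 = N := Real.sq_sqrt hNnn
  have ht2 : t^2 = G2 := Real.sq_sqrt hG2nn
  have hsnn : 0 ≤ s := Real.sqrt_nonneg _
  have htnn : 0 ≤ t := Real.sqrt_nonneg _
  have hMtoReal : M.toReal = s * (2 * t) := by
    rw [hM, ENNReal.toReal_mul, ← ENNReal.toReal_rpow, ← ENNReal.toReal_rpow,
      ENNReal.toReal_ofReal hNnn,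
      show ((4:ℝ≥0∞) * ENNReal.ofReal G2).toReal = 4 * G2 by
        rw [ENNReal.toReal_mul, ENNReal.toReal_ofReal hG2nn]; norm_num,
      ← Real.sqrt_eq_rpow, ← Real.sqrt_eq_rpow, ← hs, ht,
      show (4:ℝ)*G2 = 2^2 * G2 by norm_num,
      Real.sqrt_mul (by positivity) G2, Real.sqrt_sq (by norm_num : (0:ℝ) ≤ 2)]
  have hTkin : Tkin u = (1/2) * G2 := rfl
  have hTnn : 0 ≤ Tkin u := by rw [hTkin]; positivity
  set w := Real.sqrt (Tkin u) with hwdef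
  have hw2 : w^2 = Tkin u := Real.sq_sqrt hTnn
  have hwnn : 0 ≤ w := Real.sqrt_nonneg _
  have htw : t ≤ 2*w := by nlinarith [ht2, hw2, hTkin, htnn, hwnn]
  have hDle : Dint n ≤ (1/(16*Real.pi)) * (N * (s * (2*t))) := by
    have hpos : (0:ℝ) < 1/(16*Real.pi) := by positivity
    rw [Dint]
    refine mul_le_mul_of_nonneg_left ?_ hpos.le
    calc ∫ x, ∫ y, n x * n y / dist x y ≤ N * M.toReal := hJ
      _ = N * (s*(2*t)) := by rw [hMtoReal]
  have h32 : N ^ ((3:ℝ)/2) = s^3 := by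
    have h1 : N ^ ((3:ℝ)/2) = (N ^ ((1:ℝ)/2))^(3:ℕ) := by
      rw [← Real.rpow_natCast (N ^ ((1:ℝ)/2)) 3, ← Real.rpow_mul hNnn]
      norm_num
    rw [h1, ← Real.sqrt_eq_rpow]
  have h12 : (Tkin u) ^ ((1:ℝ)/2) = w := by rw [← Real.sqrt_eq_rpow]
  have hD2 : Dint n ≤ s^3 * w := by
    refine le_trans hDle ?_
    have hπ := Real.pi_gt_three
    have h1 : (1/(16*Real.pi)) * (N * (s * (2*t))) = (s^3*t)/(8*Real.pi) := by
      rw [← hs2]; field_simp; ring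
    rw [h1]
    rw [div_le_iff₀ (by positivity)]
    nlinarith [mul_nonneg (mul_nonneg (mul_nonneg hsnn hsnn) hsnn) hwnn,
      mul_le_mul_of_nonneg_left htw (mul_nonneg (mul_nonneg hsnn hsnn) hsnn)]
  constructor
  · -- first bound
    have h1 : s^3 * w ≤ (1/4) * Tkin u + 1 * N^3 := by
      have h2 : s^3*w ≤ w^2/4 + (s^3)^2 := by nlinarith [sq_nonneg (w/2 - s^3)]
      have h3 : (s^3)^2 = N^3 := by rw [← hs2]; ring
      rw [hw2, h3] at h2
      linarith
    exact le_trans hD2 h1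
  · rw [h32, h12, one_mul]
    exact hD2
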